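/- For every integer k ≥ 1, the commutator subgroup γ_2(G_k) = [G_k, G_k] has exponent exactly 4: every element g of γ_2(G_k) satisfies g^4 = 1, and the element [y, x] has order 4. -/

import Mathlib

open Subgroup
open scoped commutatorElement

namespace P2G

/-- The commutator `[a,b] = a⁻¹ b⁻¹ a b` (left-normed convention of the paper). -/
def comm {M : Type*} [Group M] (a b : M) : M := a⁻¹ * b⁻¹ * a * b

def X : FreeGroup (Fin 2) := FreeGroup.of 0
def Y : FreeGroup (Fin 2) := FreeGroup.of 1

/-- `y_j = x^(-j) y x^j` in the free group. -/
def yF (j : ℤ) : FreeGroup (Fin 2) := X ^ (-j) * Y * X ^ j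

/-- Relations for `G_k`:
`x^(2^(k+1)) = y^4 = [x^(2^k), y] = [y^2, x] = 1` and
`[y_0,y_i]^2 = [y_0,y_i,x] = [y_0,y_i,y] = 1` for `1 ≤ i ≤ 2^(k-1)`. -/
def rels (k : ℕ) : Set (FreeGroup (Fin 2)) :=
  {X ^ 2 ^ (k + 1), Y ^ 4, comm (X ^ 2 ^ k) Y, comm (Y ^ 2) X} ∪
    ⋃ i ∈ Set.Icc 1 (2 ^ (k - 1)),
      {comm (yF 0) (yF i) ^ 2, comm (comm (yF 0) (yF i)) X, comm (comm (yF 0) (yF i)) Y}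

/-- The group `G_k`, given by the above presentation. -/
abbrev G (k : ℕ) := PresentedGroup (rels k)

/-- The generator `x` of `G_k`. -/
def x (k : ℕ) : G k := PresentedGroup.of 0

/-- The generator `y` of `G_k`. -/
def y (k : ℕ) : G k := PresentedGroup.of 1

/-- `y_j = x^(-j) y x^j` in `G_k`. -/
def yg (k : ℕ) (j : ℤ) : G k := x k ^ (-j) * y k * x k ^ j

/-- `H_k`, the normal closure of `y` in `G_k`. -/
def Hsub (k : ℕ) : Subgroup (G k) := Subgroup.normalClosure {y k}

/-- `Z_k`, the normal closure in `G_k` of `{x^(2^k), y^2} ∪ {[y_0,y_i] : 1 ≤ i ≤ 2^(k-1)}`. -/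
def Zsub (k : ℕ) : Subgroup (G k) :=
  Subgroup.normalClosure ({x k ^ 2 ^ k, y k ^ 2} ∪
    {g | ∃ i : ℕ, 1 ≤ i ∧ i ≤ 2 ^ (k - 1) ∧ g = comm (yg k 0) (yg k i)})

/-- `G_k^(2^j)`, the subgroup generated by all `2^j`-th powers of elements of `G_k`. -/
def pow2 (k j : ℕ) : Subgroup (G k) := Subgroup.closure (Set.range fun g : G k => g ^ 2 ^ j)

/-- `w = y_(2^k − 1) y_(2^k − 2) ⋯ y_1 y_0` in `G_k`. -/
def w (k : ℕ) : G k := (((List.range (2 ^ k)).reverse).map fun j => yg k j).prod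

/-- The left-normed commutator `c k i = [y, x, …(i copies of x)…, x]`; `c k 0 = y`. -/
def c (k : ℕ) : ℕ → G k
  | 0 => y k
  | i + 1 => comm (c k i) (x k)

/-- `γ_m(G_k)`, the `m`-th term of the lower central series (`γ_1 = G_k`). -/
abbrev gamma (k m : ℕ) : Subgroup (G k) := Subgroup.lowerCentralSeries (⊤ : Subgroup (G k)) (m - 1)

section Identities
variable {Γ : Type*} [Group Γ]
lemma comm_one_left (b : Γ) : comm 1 b = 1 := by simp [comm]
lemma comm_one_right (a : Γ) : comm a 1 = 1 := by simp [comm]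
lemma comm_self (a : Γ) : comm a a = 1 := by simp [comm]
lemma comm_inv (a b : Γ) : (comm a b)⁻¹ = comm b a := by simp [comm]; group
lemma comm_mul_right (a b c : Γ) : comm a (b*c) = comm a c * (c⁻¹ * comm a b * c) := by
  simp [comm]; group
lemma comm_inv_right (a b : Γ) : comm a b⁻¹ = (b * comm a b * b⁻¹)⁻¹ := by
  simp [comm]; group
lemma comm_mul_left (a b g : Γ) : comm (a*b) g = (b⁻¹ * comm a g * b) * comm b g := by
  simp [comm]; group
lemma comm_inv_left (a g : Γ) : comm a⁻¹ g = a * (comm a g)⁻¹ * a⁻¹ := by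
  simp [comm]; group
lemma sq_mul (a b : Γ) : (a*b)^2 = a^2 * comm a b⁻¹ * b^2 := by
  simp [comm, pow_two]; group
lemma comm_conj (g a b : Γ) : g⁻¹ * comm a b * g = comm (g⁻¹*a*g) (g⁻¹*b*g) := by
  simp [comm]; group
lemma comm_eq_one_iff {a b : Γ} : comm a b = 1 ↔ a * b = b * a := by
  have h : comm a b = (b*a)⁻¹ * (a*b) := by simp [comm]; group
  rw [h, inv_mul_eq_one]; exact eq_comm
lemma comm_map {Δ : Type*} [Group Δ] (φ : Γ →* Δ) (a b : Γ) :
    φ (comm a b) = comm (φ a) (φ b) := by simp [comm]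
lemma conj_eq_of_commute {a u : Γ} (h : Commute a u) : a⁻¹ * u * a = u := by
  rw [mul_assoc, ← h.eq, inv_mul_cancel_left]
end Identities

/-- The subgroup of central elements of square one. -/
def CC (Γ : Type*) [Group Γ] : Subgroup Γ where
  carrier := {g | g^2 = 1 ∧ ∀ h, Commute g h}
  one_mem' := ⟨one_pow 2, fun h => Commute.one_left h⟩
  mul_mem' := by
    rintro a b ⟨ha2, hac⟩ ⟨hb2, hbc⟩
    refine ⟨?_, fun h => (hac h).mul_left (hbc h)⟩
    rw [(hac b).mul_pow, ha2, hb2, one_mul]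
  inv_mem' := by
    rintro a ⟨ha2, hac⟩
    exact ⟨by rw [inv_pow, ha2, inv_one], fun h => (hac h).inv_left⟩

variable {Γ : Type*} [Group Γ]

lemma CC_sq {u : Γ} (hu : u ∈ CC Γ) : u^2 = 1 := hu.1
lemma CC_conj {u : Γ} (hu : u ∈ CC Γ) (h : Γ) : h⁻¹ * u * h = u :=
  conj_eq_of_commute (hu.2 h).symm
lemma CC_conj' {u : Γ} (hu : u ∈ CC Γ) (h : Γ) : h * u * h⁻¹ = u := by
  have := CC_conj hu h⁻¹; rwa [inv_inv] at this

lemma commute_all {x y : Γ} (hgen : Subgroup.closure {x, y} = ⊤) (g : Γ)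
    (hx : Commute g x) (hy : Commute g y) : ∀ h, Commute g h := by
  intro h
  have hle : Subgroup.closure {x, y} ≤ Subgroup.centralizer {g} := by
    rw [Subgroup.closure_le]
    rintro z (rfl | rfl)
    · exact Subgroup.mem_centralizer_iff.mpr (by rintro s rfl; exact hx.eq)
    · exact Subgroup.mem_centralizer_iff.mpr (by rintro s rfl; exact hy.eq)
  have hmem : h ∈ Subgroup.centralizer {g} := hle (hgen ▸ Subgroup.mem_top h)
  exact Subgroup.mem_centralizer_iff.mp hmem g rfl

section Main

variable (x y : Γ)

/-- conjugates of `y` by powers of `x` -/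
def yjf (j : ℤ) : Γ := x^(-j) * y * x^j

/-- the subgroup generated by all `y_j` -/
def Asub : Subgroup Γ := Subgroup.closure (Set.range (yjf x y))

lemma yjf_zero : yjf x y 0 = y := by simp [yjf]

lemma yjf_conj (j s : ℤ) : yjf x y (j+s) = (x^s)⁻¹ * yjf x y j * x^s := by
  simp only [yjf, neg_add, zpow_add, zpow_neg]
  group

lemma yjf_mem (j : ℤ) : yjf x y j ∈ Asub x y :=
  Subgroup.subset_closure ⟨j, rfl⟩

variable {n : ℕ}

lemma yjf_period (hxn : Commute (x^n) y) (j q : ℤ) :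
    yjf x y (j + n*q) = yjf x y j := by
  have hq : Commute (x ^ ((n:ℤ)*q)) y := by
    have := (hxn.zpow_left q)
    rwa [← zpow_natCast x n, ← zpow_mul] at this
  have h1 : Commute (x ^ ((n:ℤ)*q)) (yjf x y j) := by
    simp only [yjf]
    exact (((Commute.zpow_zpow_self x _ _)).mul_right hq).mul_right
      (Commute.zpow_zpow_self x _ _)
  rw [yjf_conj, conj_eq_of_commute h1]

lemma comm0_mem (hn : n = 2*half) (hhalf : 1 ≤ half)
    (hxn : Commute (x^n) y)
    (hC : ∀ i : ℕ, 1 ≤ i → i ≤ half → comm (yjf x y 0) (yjf x y (i:ℤ)) ∈ CC Γ) :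
    ∀ m : ℤ, comm (yjf x y 0) (yjf x y m) ∈ CC Γ := by
  intro m
  have hn0 : 0 < (n:ℤ) := by
    have : 0 < n := by omega
    exact_mod_cast this
  have hr0 : 0 ≤ m % n := Int.emod_nonneg m (ne_of_gt hn0)
  have hrn : m % n < n := Int.emod_lt_of_pos m hn0
  have hm : yjf x y m = yjf x y (m % n) := by
    conv_lhs => rw [← Int.emod_add_mul_ediv m n]
    exact yjf_period x y hxn (m % n) (m / n)
  rw [hm]
  set r := m % n with hrdef
  by_cases hr : r = 0
  · rw [hr, comm_self]; exact one_mem _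
  by_cases hr2 : r ≤ half
  · have hcast : ((r.toNat : ℤ)) = r := Int.toNat_of_nonneg hr0
    rw [← hcast]
    exact hC r.toNat (by omega) (by omega)
  · push_neg at hr2
    have hkey : comm (yjf x y 0) (yjf x y (-r)) ∈ CC Γ := by
      have hper : yjf x y (-r) = yjf x y ((n:ℤ) - r) := by
        have h := yjf_period x y hxn (-r) 1
        rw [mul_one] at h
        rw [← h]; ring_nf
      rw [hper]
      have hcast : ((((n:ℤ) - r).toNat : ℤ)) = (n:ℤ) - r :=
        Int.toNat_of_nonneg (by omega)
      rw [← hcast]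
      exact hC ((n:ℤ) - r).toNat (by omega) (by omega)
    have hconj : (x^r)⁻¹ * comm (yjf x y 0) (yjf x y (-r)) * (x^r)
        = comm (yjf x y r) (yjf x y 0) := by
      rw [comm_conj]
      congr 1
      · rw [← yjf_conj, zero_add]
      · rw [← yjf_conj, neg_add_cancel]
    have h2 : comm (yjf x y r) (yjf x y 0) ∈ CC Γ := by
      rw [← hconj, CC_conj hkey]; exact hkey
    rw [← comm_inv]
    exact inv_mem h2

lemma comm_yj_mem (hn : n = 2*half) (hhalf : 1 ≤ half)
    (hxn : Commute (x^n) y)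
    (hC : ∀ i : ℕ, 1 ≤ i → i ≤ half → comm (yjf x y 0) (yjf x y (i:ℤ)) ∈ CC Γ) :
    ∀ a b : ℤ, comm (yjf x y a) (yjf x y b) ∈ CC Γ := by
  intro a b
  have h := comm0_mem x y hn hhalf hxn hC (b - a)
  have hconj : (x^a)⁻¹ * comm (yjf x y 0) (yjf x y (b-a)) * (x^a)
      = comm (yjf x y a) (yjf x y b) := by
    rw [comm_conj]
    congr 1
    · rw [← yjf_conj, zero_add]
    · rw [← yjf_conj, sub_add_cancel]
  rw [← hconj, CC_conj h]
  exact h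

lemma yjf_sq (hy2x : Commute (y^2) x) (j : ℤ) : (yjf x y j)^2 = y^2 := by
  have h : Commute (x^j) (y^2) := (hy2x.zpow_right j).symm
  have : (yjf x y j)^2 = (x^j)⁻¹ * y^2 * x^j := by
    simp only [yjf, pow_two, zpow_neg]; group
  rw [this, conj_eq_of_commute h]

lemma comm_with_A (g : Γ) (hg : ∀ j : ℤ, comm g (yjf x y j) ∈ CC Γ) :
    ∀ b ∈ Asub x y, comm g b ∈ CC Γ := by
  intro b hb
  induction hb using Subgroup.closure_induction with
  | mem z hz => obtain ⟨j, rfl⟩ := hz; exact hg j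
  | one => rw [comm_one_right]; exact one_mem _
  | mul u v hu hv pu pv =>
      rw [comm_mul_right, CC_conj pu v]
      exact mul_mem pv pu
  | inv u hu pu =>
      rw [comm_inv_right, CC_conj' pu u]
      exact inv_mem pu

lemma main_sq (hgen : Subgroup.closure {x, y} = ⊤)
    (hy4 : y^4 = 1) (hy2x : Commute (y^2) x)
    (hn : n = 2*half) (hhalf : 1 ≤ half) (hxn : Commute (x^n) y)
    (hC : ∀ i : ℕ, 1 ≤ i → i ≤ half → comm (yjf x y 0) (yjf x y (i:ℤ)) ∈ CC Γ) :
    ∀ a ∈ Asub x y, a^2 ∈ CC Γ ∧ ∀ b ∈ Asub x y, comm a b ∈ CC Γ := by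
  have hy2 : y^2 ∈ CC Γ := by
    refine ⟨by rw [← pow_mul]; exact hy4, ?_⟩
    exact commute_all hgen (y^2) hy2x ((Commute.refl y).pow_left 2)
  intro a ha
  induction ha using Subgroup.closure_induction with
  | mem z hz =>
      obtain ⟨j, rfl⟩ := hz
      refine ⟨by rw [yjf_sq x y hy2x]; exact hy2, ?_⟩
      exact comm_with_A x y _ (fun i => comm_yj_mem x y hn hhalf hxn hC j i)
  | one =>
      exact ⟨by rw [one_pow]; exact one_mem _,
        fun b _ => by rw [comm_one_left]; exact one_mem _⟩
  | mul u v hu hv pu pv =>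
      constructor
      · rw [sq_mul]
        exact mul_mem (mul_mem pu.1 (pu.2 v⁻¹ (inv_mem hv))) pv.1
      · intro b hb
        rw [comm_mul_left, CC_conj (pu.2 b hb) v]
        exact mul_mem (pu.2 b hb) (pv.2 b hb)
  | inv u hu pu =>
      constructor
      · rw [inv_pow]; exact inv_mem pu.1
      · intro b hb
        rw [comm_inv_left, CC_conj' (inv_mem (pu.2 b hb)) u]
        exact inv_mem (pu.2 b hb)

lemma pow4_of_memA (hgen : Subgroup.closure {x, y} = ⊤)
    (hy4 : y^4 = 1) (hy2x : Commute (y^2) x)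
    (hn : n = 2*half) (hhalf : 1 ≤ half) (hxn : Commute (x^n) y)
    (hC : ∀ i : ℕ, 1 ≤ i → i ≤ half → comm (yjf x y 0) (yjf x y (i:ℤ)) ∈ CC Γ) :
    ∀ a ∈ Asub x y, a^4 = 1 := by
  intro a ha
  have h := (main_sq x y hgen hy4 hy2x hn hhalf hxn hC a ha).1
  rw [show (4:ℕ) = 2*2 from rfl, pow_mul, CC_sq h]

lemma conjA (s : ℤ) (a : Γ) (ha : a ∈ Asub x y) : x^s * a * x^(-s) ∈ Asub x y := by
  induction ha using Subgroup.closure_induction with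
  | mem z hz =>
      obtain ⟨j, rfl⟩ := hz
      have h : x^s * yjf x y j * x^(-s) = yjf x y (j + (-s)) := by
        rw [yjf_conj]; group
      rw [h]
      exact yjf_mem x y _
  | one => simpa using one_mem (Asub x y)
  | mul u v hu hv pu pv =>
      have h : x^s*(u*v)*x^(-s) = (x^s*u*x^(-s))*(x^s*v*x^(-s)) := by group
      rw [h]; exact mul_mem pu pv
  | inv u hu pu =>
      have h : x^s*u⁻¹*x^(-s) = (x^s*u*x^(-s))⁻¹ := by group
      rw [h]; exact inv_mem pu

lemma Asub_normal (hgen : Subgroup.closure {x, y} = ⊤) : (Asub x y).Normal := by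
  rw [← Subgroup.normalizer_eq_top_iff]
  rw [eq_top_iff, ← hgen, Subgroup.closure_le]
  have hxnorm : x ∈ Subgroup.normalizer (Asub x y : Set Γ) := by
    rw [Subgroup.mem_normalizer_iff]
    intro h
    constructor
    · intro hh
      have := conjA x y 1 h hh
      simpa [zpow_one] using this
    · intro hh
      have h2 := conjA x y (-1) (x*h*x⁻¹) hh
      rw [show x^(-1:ℤ) * (x*h*x⁻¹) * x^(-(-1:ℤ)) = h by group] at h2
      exact h2
  have hynorm : y ∈ Subgroup.normalizer (Asub x y : Set Γ) :=
    Subgroup.le_normalizer (Subgroup.subset_closure ⟨0, yjf_zero x y⟩)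
  rintro z (rfl | rfl)
  exacts [hxnorm, hynorm]

lemma commutator_le_A (hgen : Subgroup.closure {x, y} = ⊤) :
    commutator Γ ≤ Asub x y := by
  haveI := Asub_normal x y hgen
  rw [commutator_def, Subgroup.commutator_le]
  intro g _ h _
  set q := QuotientGroup.mk' (Asub x y) with hq
  have hcomm : ∀ u v : Γ ⧸ Asub x y, Commute u v := by
    have hgenq : Subgroup.closure ({q x} : Set (Γ ⧸ Asub x y)) = ⊤ := by
      have h1 : (Subgroup.closure ({x, y} : Set Γ)).map q = ⊤ := by
        rw [hgen]
        rw [← MonoidHom.range_eq_map]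
        exact MonoidHom.range_eq_top.mpr (QuotientGroup.mk'_surjective _)
      rw [MonoidHom.map_closure, Set.image_pair] at h1
      have hqy : q y = 1 := (QuotientGroup.eq_one_iff _).mpr
        (Subgroup.subset_closure ⟨0, yjf_zero x y⟩)
      rw [hqy] at h1
      have hset : ({q x, (1 : Γ ⧸ Asub x y)} : Set _) = {q x} ∪ {1} := rfl
      rw [hset, Subgroup.closure_union, Subgroup.closure_singleton_one, sup_bot_eq] at h1
      exact h1
    intro u v
    have hu : u ∈ Subgroup.closure ({q x} : Set (Γ ⧸ Asub x y)) := by rw [hgenq]; trivial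
    have hv : v ∈ Subgroup.closure ({q x} : Set (Γ ⧸ Asub x y)) := by rw [hgenq]; trivial
    obtain ⟨a, rfl⟩ := Subgroup.mem_closure_singleton.mp hu
    obtain ⟨b, rfl⟩ := Subgroup.mem_closure_singleton.mp hv
    exact Commute.zpow_zpow_self _ _ _
  apply (QuotientGroup.eq_one_iff _).mp
  have hmap : (↑(⁅g, h⁆) : Γ ⧸ Asub x y) = ⁅(↑g : Γ ⧸ Asub x y), ↑h⁆ := by
    simp [commutatorElement_def]
  rw [hmap]
  exact commutatorElement_eq_one_iff_commute.mpr (hcomm _ _)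

end Main

section ZpowParity
variable {Γ : Type*} [Group Γ]
lemma zpow_even_eq_one {g : Γ} (h : g * g = 1) {m : ℤ} (hm : Even m) : g ^ m = 1 := by
  obtain ⟨t, rfl⟩ := hm
  rw [← two_mul, zpow_mul]
  have h2 : g ^ (2:ℤ) = 1 := by rw [show (2:ℤ) = 1 + 1 from rfl, zpow_add, zpow_one, h]
  rw [h2, one_zpow]
lemma zpow_odd_eq_self {g : Γ} (h : g * g = 1) {m : ℤ} (hm : Odd m) : g ^ m = g := by
  obtain ⟨t, rfl⟩ := hm
  rw [zpow_add, zpow_one, zpow_mul]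
  have h2 : g ^ (2:ℤ) = 1 := by rw [show (2:ℤ) = 1 + 1 from rfl, zpow_add, zpow_one, h]
  rw [h2, one_zpow, one_mul]
end ZpowParity

def xhat : Equiv.Perm (Fin 8) :=
  ⟨![0,2,1,3,5,4,7,6], ![0,2,1,3,5,4,7,6], by decide, by decide⟩
def yhat : Equiv.Perm (Fin 8) :=
  ⟨![1,3,4,6,7,2,0,5], ![6,0,5,1,2,7,3,4], by decide, by decide⟩

lemma xhat_sq : xhat * xhat = 1 := by decide
lemma yhat_four : yhat ^ 4 = 1 := by decide
lemma model_y2x : comm (yhat^2) xhat = 1 := by decide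
lemma model_b1 : comm yhat (xhat * yhat * xhat) ^ 2 = 1 := by decide
lemma model_b2 : comm (comm yhat (xhat * yhat * xhat)) xhat = 1 := by decide
lemma model_b3 : comm (comm yhat (xhat * yhat * xhat)) yhat = 1 := by decide
lemma model_ne : comm yhat xhat ^ 2 ≠ 1 := by decide


section Instantiation

variable (k : ℕ)

/-- quotient map onto the presented group -/
abbrev pik (k : ℕ) : FreeGroup (Fin 2) →* G k := PresentedGroup.mk (rels k)

lemma rel_one {r : FreeGroup (Fin 2)} (hr : r ∈ rels k) : pik k r = 1 :=
  (QuotientGroup.eq_one_iff _).mpr (Subgroup.subset_normalClosure hr)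

lemma pik_X : pik k X = x k := rfl
lemma pik_Y : pik k Y = y k := rfl

lemma pik_yF (j : ℤ) : pik k (yF j) = yg k j := by
  simp only [yF, yg, map_mul, map_zpow, pik_X, pik_Y]

lemma yg_eq_yjf (j : ℤ) : yg k j = yjf (x k) (y k) j := rfl

lemma gen_top : Subgroup.closure ({x k, y k} : Set (G k)) = ⊤ := by
  have h := PresentedGroup.closure_range_of (rels k)
  have hs : Set.range (PresentedGroup.of : Fin 2 → G k) = {x k, y k} := by
    ext g
    constructor
    · rintro ⟨i, rfl⟩
      fin_cases i
      · exact Or.inl rfl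
      · exact Or.inr rfl
    · rintro (rfl | rfl)
      · exact ⟨0, rfl⟩
      · exact ⟨1, rfl⟩
  rw [← hs]
  exact h

lemma rel_y4 : (y k)^4 = 1 := by
  have h := rel_one k (r := Y^4) (Set.mem_union_left _ (by simp))
  rwa [map_pow, pik_Y] at h

lemma rel_y2x : Commute ((y k)^2) (x k) := by
  have h := rel_one k (r := comm (Y^2) X) (Set.mem_union_left _ (by simp))
  rw [comm_map, map_pow, pik_X, pik_Y] at h
  exact comm_eq_one_iff.mp h

lemma rel_xny : Commute ((x k)^(2^k)) (y k) := by
  have h := rel_one k (r := comm (X^(2^k)) Y) (Set.mem_union_left _ (by simp))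
  rw [comm_map, map_pow, pik_X, pik_Y] at h
  exact comm_eq_one_iff.mp h

lemma rel_C : ∀ i : ℕ, 1 ≤ i → i ≤ 2^(k-1) →
    comm (yjf (x k) (y k) 0) (yjf (x k) (y k) (i:ℤ)) ∈ CC (G k) := by
  intro i hi1 hi2
  have hic : ((i:ℤ)) ∈ Set.Icc (1:ℤ) (2^(k-1)) := by
    rw [Set.mem_Icc]
    constructor
    · exact_mod_cast hi1
    · exact_mod_cast hi2
  have hmem : ∀ r ∈ ({comm (yF 0) (yF (i:ℤ)) ^ 2, comm (comm (yF 0) (yF (i:ℤ))) X,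
      comm (comm (yF 0) (yF (i:ℤ))) Y} : Set (FreeGroup (Fin 2))), r ∈ rels k := by
    intro r hr
    exact Set.mem_union_right _ (Set.mem_biUnion hic hr)
  have h1 := rel_one k (hmem (comm (yF 0) (yF (i:ℤ)) ^ 2) (by simp))
  have h2 := rel_one k (hmem (comm (comm (yF 0) (yF (i:ℤ))) X) (by simp))
  have h3 := rel_one k (hmem (comm (comm (yF 0) (yF (i:ℤ))) Y) (by simp))
  rw [map_pow, comm_map, pik_yF, pik_yF] at h1
  rw [comm_map, comm_map, pik_yF, pik_yF, pik_X] at h2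
  rw [comm_map, comm_map, pik_yF, pik_yF, pik_Y] at h3
  rw [yg_eq_yjf, yg_eq_yjf] at h1 h2 h3
  refine ⟨h1, ?_⟩
  exact commute_all (gen_top k) _ (comm_eq_one_iff.mp h2) (comm_eq_one_iff.mp h3)

lemma pow_split (hk : 1 ≤ k) : 2^k = 2 * 2^(k-1) := by
  obtain ⟨k', rfl⟩ : ∃ k', k = k'+1 := ⟨k-1, by omega⟩
  rw [Nat.add_sub_cancel, pow_succ, Nat.mul_comm]

lemma gamma2_pow4 (hk : 1 ≤ k) : ∀ g ∈ commutator (G k), g ^ 4 = 1 := by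
  intro g hg
  have hA : g ∈ Asub (x k) (y k) := commutator_le_A (x k) (y k) (gen_top k) hg
  exact pow4_of_memA (x k) (y k) (gen_top k) (rel_y4 k) (rel_y2x k)
    (pow_split k hk) Nat.one_le_two_pow (rel_xny k) (rel_C k) g hA

end Instantiation


section Model

/-- the map sending the generators to the model permutations -/
def fmod : Fin 2 → Equiv.Perm (Fin 8) := ![xhat, yhat]

lemma lift_X : FreeGroup.lift fmod X = xhat := by simp [X, fmod]
lemma lift_Y : FreeGroup.lift fmod Y = yhat := by simp [Y, fmod]

lemma lift_yF0 : FreeGroup.lift fmod (yF 0) = yhat := by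
  rw [yF, neg_zero, zpow_zero, one_mul, mul_one, lift_Y]

lemma lift_yF (i : ℤ) :
    FreeGroup.lift fmod (yF i) = if Even i then yhat else xhat * yhat * xhat := by
  have hx2 : xhat * xhat = 1 := xhat_sq
  rw [yF, map_mul, map_mul, map_zpow, map_zpow, lift_X, lift_Y]
  rcases Int.even_or_odd i with he | ho
  · rw [zpow_even_eq_one hx2 he.neg, zpow_even_eq_one hx2 he, one_mul, mul_one, if_pos he]
  · rw [zpow_odd_eq_self hx2 ho.neg, zpow_odd_eq_self hx2 ho,
      if_neg (Int.not_even_iff_odd.mpr ho)]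

lemma model_rels (k : ℕ) (hk : 1 ≤ k) :
    ∀ r ∈ rels k, FreeGroup.lift fmod r = 1 := by
  intro r hr
  rcases hr with h | h
  · simp only [Set.mem_insert_iff, Set.mem_singleton_iff] at h
    rcases h with rfl | rfl | rfl | rfl
    · rw [map_pow, lift_X, pow_succ', pow_mul, pow_two, xhat_sq, one_pow]
    · rw [map_pow, lift_Y]; exact yhat_four
    · rw [comm_map, map_pow, lift_X, lift_Y, pow_split k hk, pow_mul, pow_two,
        xhat_sq, one_pow, comm_one_left]
    · rw [comm_map, map_pow, lift_Y, lift_X]; exact model_y2x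
  · rw [Set.mem_iUnion₂] at h
    obtain ⟨i, hi, hr⟩ := h
    simp only [Set.mem_insert_iff, Set.mem_singleton_iff] at hr
    rcases Int.even_or_odd i with he | ho
    · have hyi : FreeGroup.lift fmod (yF i) = yhat := by rw [lift_yF, if_pos he]
      rcases hr with rfl | rfl | rfl
      · rw [map_pow, comm_map, lift_yF0, hyi, comm_self, one_pow]
      · rw [comm_map, comm_map, lift_yF0, hyi, lift_X, comm_self, comm_one_left]
      · rw [comm_map, comm_map, lift_yF0, hyi, lift_Y, comm_self, comm_one_left]
    · have hyi : FreeGroup.lift fmod (yF i) = xhat * yhat * xhat := by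
        rw [lift_yF, if_neg (Int.not_even_iff_odd.mpr ho)]
      rcases hr with rfl | rfl | rfl
      · rw [map_pow, comm_map, lift_yF0, hyi]; exact model_b1
      · rw [comm_map, comm_map, lift_yF0, hyi, lift_X]; exact model_b2
      · rw [comm_map, comm_map, lift_yF0, hyi, lift_Y]; exact model_b3

end Model

lemma order_four {Γ : Type*} [Group Γ] {g : Γ} (h4 : g^4 = 1) (h2 : g^2 ≠ 1) :
    orderOf g = 4 := by
  have hdvd : orderOf g ∣ 2^2 := by
    have := orderOf_dvd_of_pow_eq_one h4
    norm_num at this ⊢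
    exact this
  obtain ⟨j, hj2, hjeq⟩ := (Nat.dvd_prime_pow Nat.prime_two).mp hdvd
  interval_cases j
  · exfalso
    apply h2
    have hg1 : g = 1 := orderOf_eq_one_iff.mp (by simpa using hjeq)
    rw [hg1, one_pow]
  · exfalso
    apply h2
    have := pow_orderOf_eq_one g
    rwa [hjeq, pow_one] at this
  · simpa using hjeq

/-- For every `k ≥ 1`, the commutator subgroup `γ_2(G_k) = [G_k, G_k]` has
exponent exactly `4`: every `g ∈ γ_2(G_k)` satisfies `g^4 = 1`, and `[y,x]` has order `4`. -/
theorem stmt5 (k : ℕ) (hk : 1 ≤ k) :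
    (∀ g ∈ gamma k 2, g ^ 4 = 1) ∧ orderOf (comm (y k) (x k)) = 4 := by
  constructor
  · intro g hg
    exact gamma2_pow4 k hk g (by rw [show gamma k 2 = commutator (G k) from Subgroup.top_lowerCentralSeries_one] at hg; exact hg)
  · have hmem : comm (y k) (x k) ∈ commutator (G k) := by
      have hEq : comm (y k) (x k) = ⁅(y k)⁻¹, (x k)⁻¹⁆ := by
        simp [comm, commutatorElement_def]
      rw [hEq, _root_.commutator_def]
      exact Subgroup.commutator_mem_commutator (Subgroup.mem_top _) (Subgroup.mem_top _)
    have h4 := gamma2_pow4 k hk _ hmem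
    have h2 : (comm (y k) (x k))^2 ≠ 1 := by
      intro hg2
      apply model_ne
      have hcast := congrArg (PresentedGroup.toGroup (model_rels k hk)) hg2
      have hx : PresentedGroup.toGroup (model_rels k hk) (x k) = xhat := by
        show PresentedGroup.toGroup (model_rels k hk) (PresentedGroup.of 0) = xhat
        rw [PresentedGroup.toGroup.of]
        simp [fmod]
      have hy : PresentedGroup.toGroup (model_rels k hk) (y k) = yhat := by
        show PresentedGroup.toGroup (model_rels k hk) (PresentedGroup.of 1) = yhat
        rw [PresentedGroup.toGroup.of]
        simp [fmod]
      rw [map_pow, comm_map, map_one, hx, hy] at hcast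
      exact hcast
    exact order_four h4 h2


end P2G
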